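/- arXiv:1912.02306 — 2 statements merged into one kernel-verified Lean document; each statement's English description precedes it below -/
import Mathlib

section
/- Let ∗ be a finite character star-operation on a domain D and let A be a P-∗-afg-homogeneous ideal of D. Then some positive power (A^n)_∗ is a principal ideal of D. -/
open FractionalIdeal

variable (D : Type*) (K : Type*) [CommRing D] [IsDomain D] [Field K] [Algebra D K]
  [IsFractionRing D K]

/-- A finite character star-operation on the integral domain `D`, acting on the
nonzero fractional ideals of `D` inside its quotient field `K`. -/
structure StarOperation where
  star : FractionalIdeal (nonZeroDivisors D) K → FractionalIdeal (nonZeroDivisors D) K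
  star_principal : ∀ x : K, x ≠ 0 →
    star (spanSingleton (nonZeroDivisors D) x) = spanSingleton (nonZeroDivisors D) x
  star_smul : ∀ (x : K) (A : FractionalIdeal (nonZeroDivisors D) K), x ≠ 0 → A ≠ 0 →
    star (spanSingleton (nonZeroDivisors D) x * A) = spanSingleton (nonZeroDivisors D) x * star A
  le_star : ∀ A, A ≠ 0 → A ≤ star A
  star_mono : ∀ A B, A ≠ 0 → B ≠ 0 → A ≤ B → star A ≤ star B
  star_star : ∀ A, A ≠ 0 → star (star A) = star A
  finite_character : ∀ A, A ≠ 0 → ∀ x ∈ star A,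
    ∃ B : FractionalIdeal (nonZeroDivisors D) K,
      B ≠ 0 ∧ B ≤ A ∧ (B : Submodule D K).FG ∧ x ∈ star B

/-- A prime ideal of height one: a nonzero prime with no nonzero prime strictly below it. -/
def HeightOnePrime (P : Ideal D) : Prop :=
  P.IsPrime ∧ P ≠ ⊥ ∧ ∀ Q : Ideal D, Q.IsPrime → Q < P → Q = ⊥

/-- Membership of `x : K` in the localization `D_P` viewed inside `K`. -/
def MemLocAt (P : Ideal D) (x : K) : Prop :=
  ∃ a t : D, t ∉ P ∧ x * algebraMap D K t = algebraMap D K a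

/-- An almost valuation ring: for nonzero `a, b` some power `a^n` divides `b^n` or
conversely. -/
def AVRing (R : Type*) [CommRing R] : Prop :=
  ∀ a b : R, a ≠ 0 → b ≠ 0 → ∃ n : ℕ, 0 < n ∧ (a ^ n ∣ b ^ n ∨ b ^ n ∣ a ^ n)

/-- The `v`-operation `A ↦ (A⁻¹)⁻¹` on fractional ideals. -/
noncomputable def vOp (A : FractionalIdeal (nonZeroDivisors D) K) : FractionalIdeal (nonZeroDivisors D) K :=
  (A⁻¹)⁻¹

/-- An integral ideal is a `t`-ideal if it contains `B_v` for every nonzero finitely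
generated subideal `B`. -/
def IsTIdeal (I : Ideal D) : Prop :=
  ∀ B : Ideal D, B ≠ ⊥ → B.FG → B ≤ I →
    vOp D K (B : FractionalIdeal (nonZeroDivisors D) K) ≤ (I : FractionalIdeal (nonZeroDivisors D) K)

/-- Maximal `t`-ideals. -/
def IsTMax (P : Ideal D) : Prop :=
  P ≠ ⊥ ∧ P ≠ ⊤ ∧ IsTIdeal D K P ∧
    ∀ J : Ideal D, J ≠ ⊤ → IsTIdeal D K J → P ≤ J → J = P

/-- An integral ideal is a `w`-ideal if it contains every `x ∈ K` with `xJ ⊆ I` for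
some finitely generated ideal `J` with `J⁻¹ = D`. -/
def IsWIdeal (I : Ideal D) : Prop :=
  ∀ x : K, (∃ J : Ideal D, J.FG ∧ ((J : FractionalIdeal (nonZeroDivisors D) K))⁻¹ = 1 ∧
      spanSingleton (nonZeroDivisors D) x * (J : FractionalIdeal (nonZeroDivisors D) K) ≤
        (I : FractionalIdeal (nonZeroDivisors D) K)) →
    x ∈ (I : FractionalIdeal (nonZeroDivisors D) K)

/-- Maximal `w`-ideals. -/
def IsWMax (P : Ideal D) : Prop :=
  P ≠ ⊥ ∧ P ≠ ⊤ ∧ IsWIdeal D K P ∧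
    ∀ J : Ideal D, J ≠ ⊤ → IsWIdeal D K J → P ≤ J → J = P

/-- `P ∈ Ass(K/D)`: `P` is a prime minimal over a conductor ideal `(aD : bD)`. -/
def InAssKD (P : Ideal D) : Prop :=
  P.IsPrime ∧ ∃ a b : D, a ≠ 0 ∧ b ≠ 0 ∧
    (Ideal.span {a}).colon (Ideal.span {b}) ≤ P ∧
    ∀ Q : Ideal D, Q.IsPrime → (Ideal.span {a}).colon (Ideal.span {b}) ≤ Q → Q ≤ P → Q = P

/-- An AGCD (almost GCD) domain: for all nonzero `a, b` there is `n ≥ 1` with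
`(aⁿ, bⁿ)_v` principal. -/
def IsAGCDDomain : Prop :=
  ∀ a b : D, a ≠ 0 → b ≠ 0 → ∃ n : ℕ, 0 < n ∧ ∃ d : D,
    vOp D K ((Ideal.span {a ^ n, b ^ n} : Ideal D) : FractionalIdeal (nonZeroDivisors D) K) =
      spanSingleton (nonZeroDivisors D) (algebraMap D K d)

/-- `D_P` is an almost valuation domain, for `P` a prime of `D`. -/
def AVAtPrime {D : Type*} [CommRing D] (P : Ideal D) (hP : P.IsPrime) : Prop :=
  AVRing (Localization (@Ideal.primeCompl D _ P hP))

namespace StarOperation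

variable {D K}
variable (s : StarOperation D K)

/-- The star closure of an integral ideal, as an integral ideal. -/
def starI (I : Ideal D) : Ideal D :=
  (s.star (I : FractionalIdeal (nonZeroDivisors D) K) : Submodule D K).comap
    (Algebra.linearMap D K)

/-- An integral `∗`-ideal. -/
def IsStarIdeal (I : Ideal D) : Prop :=
  s.star (I : FractionalIdeal (nonZeroDivisors D) K) = (I : FractionalIdeal (nonZeroDivisors D) K)

/-- A maximal `∗`-ideal: maximal among proper integral `∗`-ideals (such ideals are prime). -/
def IsMaxStarIdeal (P : Ideal D) : Prop :=
  P ≠ ⊥ ∧ P ≠ ⊤ ∧ P.IsPrime ∧ s.IsStarIdeal P ∧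
    ∀ J : Ideal D, J ≠ ⊤ → s.IsStarIdeal J → P ≤ J → J = P

/-- `∗`-invertibility of a fractional ideal. -/
def IsStarInvertible (A : FractionalIdeal (nonZeroDivisors D) K) : Prop :=
  s.star (A * A⁻¹) = 1

/-- `∗`-invertibility of an integral ideal. -/
def IsStarInvertibleI (I : Ideal D) : Prop :=
  s.IsStarInvertible (I : FractionalIdeal (nonZeroDivisors D) K)

/-- A `P`-`∗`-homogeneous ideal: nonzero, finitely generated, contained in the maximal
`∗`-ideal `P` and in no other maximal `∗`-ideal. -/
def IsHomogeneous (P I : Ideal D) : Prop :=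
  I ≠ ⊥ ∧ I.FG ∧ s.IsMaxStarIdeal P ∧ I ≤ P ∧
    ∀ Q : Ideal D, s.IsMaxStarIdeal Q → I ≤ Q → Q = P

/-- A type 1 `∗`-homogeneous ideal: `M(A) = √(A_∗)`. -/
def IsType1 (P I : Ideal D) : Prop := P = (s.starI I).radical

/-- A type 2 `∗`-homogeneous ideal: `A_∗ = (M(A)ⁿ)_∗` for some `n ≥ 1`. -/
def IsType2 (P I : Ideal D) : Prop :=
  ∃ n : ℕ, 0 < n ∧
    s.star (I : FractionalIdeal (nonZeroDivisors D) K) =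
      s.star ((P ^ n : Ideal D) : FractionalIdeal (nonZeroDivisors D) K)

/-- A `P`-`∗`-almost super-homogeneous ideal. -/
def IsAlmostSuperHomogeneous (P I : Ideal D) : Prop :=
  s.IsStarInvertibleI I ∧ s.IsHomogeneous P I ∧
    ∀ (k : ℕ) (b : Fin k → D), (∀ i, b i ∈ P) →
      (∃ r : ℕ, 0 < r ∧ ((I ^ r : Ideal D) : FractionalIdeal (nonZeroDivisors D) K) ≤
        s.star ((Ideal.span (Set.range b) : Ideal D) : FractionalIdeal (nonZeroDivisors D) K)) →
      ∃ n : ℕ, 0 < n ∧ s.IsStarInvertibleI (Ideal.span (Set.range fun i => b i ^ n))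

/-- A `∗`-super-homogeneous ideal: every `∗`-homogeneous ideal containing it is
`∗`-invertible. -/
def IsSuperHomogeneous (P I : Ideal D) : Prop :=
  s.IsHomogeneous P I ∧
    ∀ B Q : Ideal D, s.IsHomogeneous Q B → I ≤ B → s.IsStarInvertibleI B

/-- A `P`-`∗`-afg-homogeneous (almost factorial general homogeneous) ideal. -/
def IsAfgHomogeneous (P I : Ideal D) : Prop :=
  s.IsStarInvertibleI I ∧ s.IsHomogeneous P I ∧
    ∀ (k : ℕ) (b : Fin k → D), (∀ i, b i ∈ P) →
      (∃ r : ℕ, 0 < r ∧ ((I ^ r : Ideal D) : FractionalIdeal (nonZeroDivisors D) K) ≤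
        s.star ((Ideal.span (Set.range b) : Ideal D) : FractionalIdeal (nonZeroDivisors D) K)) →
      ∃ n : ℕ, 0 < n ∧ ∃ d : D,
        s.star ((Ideal.span (Set.range fun i => b i ^ n) : Ideal D) :
            FractionalIdeal (nonZeroDivisors D) K) =
          spanSingleton (nonZeroDivisors D) (algebraMap D K d)

/-- A `∗`-af-homogeneous ideal: every `∗`-homogeneous ideal containing it has a power
whose `∗`-closure is principal. -/
def IsAfHomogeneous (P I : Ideal D) : Prop :=
  s.IsHomogeneous P I ∧
    ∀ B Q : Ideal D, s.IsHomogeneous Q B → I ≤ B →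
      ∃ n : ℕ, 0 < n ∧ ∃ d : D,
        s.star ((B ^ n : Ideal D) : FractionalIdeal (nonZeroDivisors D) K) =
          spanSingleton (nonZeroDivisors D) (algebraMap D K d)

/-- `D` is a `∗`-SH domain with respect to a property of ideals: every nonzero proper
principal ideal is a `∗`-product of ideals with the given property. -/
def IsSHWith (prop : Ideal D → Prop) : Prop :=
  ∀ x : D, x ≠ 0 → ¬IsUnit x →
    ∃ (k : ℕ) (A : Fin k → Ideal D), (∀ i, prop (A i)) ∧
      s.star ((∏ i, A i : Ideal D) : FractionalIdeal (nonZeroDivisors D) K) =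
        ((Ideal.span {x} : Ideal D) : FractionalIdeal (nonZeroDivisors D) K)

/-- A `∗`-almost super-SH domain. -/
def IsAlmostSuperSH : Prop :=
  s.IsSHWith fun I => ∃ P, s.IsAlmostSuperHomogeneous P I

/-- Finite character: every nonzero nonunit lies in only finitely many maximal
`∗`-ideals. -/
def FiniteCharacterDom : Prop :=
  ∀ x : D, x ≠ 0 → ¬IsUnit x → {P : Ideal D | s.IsMaxStarIdeal P ∧ x ∈ P}.Finite

/-- Independence: no two distinct maximal `∗`-ideals contain a common nonzero prime. -/
def IndependentDom : Prop :=
  ∀ P Q : Ideal D, s.IsMaxStarIdeal P → s.IsMaxStarIdeal Q → P ≠ Q →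
    ∀ L : Ideal D, L.IsPrime → L ≠ ⊥ → ¬(L ≤ P ∧ L ≤ Q)

/-- A `∗`-h-local domain. -/
def IsHLocal : Prop := s.FiniteCharacterDom ∧ s.IndependentDom

/-- A `∗`-almost independent ring of Krull type. -/
def IsAlmostIRKT : Prop :=
  s.IsHLocal ∧ ∀ (P : Ideal D) (h : s.IsMaxStarIdeal P), AVAtPrime P h.2.2.1

/-- A `∗`-almost generalized Krull domain. -/
def IsAGKD : Prop :=
  (∀ x : K, (∀ P : Ideal D, HeightOnePrime D P → MemLocAt D K P x) →
      ∃ d : D, algebraMap D K d = x) ∧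
  (∀ x : D, x ≠ 0 → ¬IsUnit x → {P : Ideal D | HeightOnePrime D P ∧ x ∈ P}.Finite) ∧
  (∀ P : Ideal D, s.IsMaxStarIdeal P ↔ HeightOnePrime D P) ∧
  (∀ (P : Ideal D) (h : s.IsMaxStarIdeal P), AVAtPrime P h.2.2.1)

/-- A `∗`-Krull domain: `∗`-h-local, `∗-Max(D) = X⁽¹⁾(D)`, and `D_P` is a DVR for each
maximal `∗`-ideal `P`. -/
def IsStarKrull : Prop :=
  s.IsHLocal ∧ (∀ P : Ideal D, s.IsMaxStarIdeal P ↔ HeightOnePrime D P) ∧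
    ∀ (P : Ideal D) (h : s.IsMaxStarIdeal P),
      @IsDiscreteValuationRing (Localization (@Ideal.primeCompl D _ P h.2.2.1)) _
        (IsLocalization.isDomain_localization (@Ideal.primeCompl_le_nonZeroDivisors D _ _ P h.2.2.1))

/-- A `∗`-almost Bézout domain. -/
def IsAlmostBezout : Prop :=
  ∀ a b : D, a ≠ 0 → b ≠ 0 → ∃ n : ℕ, 0 < n ∧ ∃ d : D,
    s.star ((Ideal.span {a ^ n, b ^ n} : Ideal D) : FractionalIdeal (nonZeroDivisors D) K) =
      spanSingleton (nonZeroDivisors D) (algebraMap D K d)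

/-- The `∗`-class group `Cl_∗(D)` is torsion: every `∗`-invertible fractional ideal has a
power whose `∗`-closure is principal. -/
def HasTorsionClassGroup : Prop :=
  ∀ A : FractionalIdeal (nonZeroDivisors D) K, A ≠ 0 → s.IsStarInvertible A →
    ∃ n : ℕ, 0 < n ∧ ∃ x : K, s.star (A ^ n) = spanSingleton (nonZeroDivisors D) x

end StarOperation

variable {D : Type*} {K : Type*} [CommRing D] [IsDomain D] [Field K] [Algebra D K]
  [IsFractionRing D K]

open StarOperation

section Helpers

open Set Finset Pointwise

/-- Products of nonzero fractional ideals are nonzero. -/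
private lemma FI_mul_ne_zero {A B : FractionalIdeal (nonZeroDivisors D) K}
    (hA : A ≠ 0) (hB : B ≠ 0) : A * B ≠ 0 := by
  rw [Ne, FractionalIdeal.eq_zero_iff] at hA hB ⊢
  push_neg at hA hB ⊢
  obtain ⟨a, ha, ha0⟩ := hA
  obtain ⟨b, hb, hb0⟩ := hB
  exact ⟨a * b, FractionalIdeal.mul_mem_mul ha hb, mul_ne_zero ha0 hb0⟩

private lemma FI_pow_ne_zero {A : FractionalIdeal (nonZeroDivisors D) K}
    (hA : A ≠ 0) (m : ℕ) : A ^ m ≠ 0 := by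
  induction m with
  | zero => simpa using one_ne_zero
  | succ m ih => rw [pow_succ]; exact FI_mul_ne_zero ih hA

/-- `A * (star B) ≤ star (A * B)`. -/
private lemma mul_star_le (s : StarOperation D K)
    {A B : FractionalIdeal (nonZeroDivisors D) K} (hA : A ≠ 0) (hB : B ≠ 0) :
    A * s.star B ≤ s.star (A * B) := by
  rw [FractionalIdeal.mul_le]
  intro a ha b hb
  by_cases ha0 : a = 0
  · subst ha0
    rw [zero_mul]
    exact zero_mem (s.star (A * B) : Submodule D K)
  have hsub : FractionalIdeal.spanSingleton (nonZeroDivisors D) a * B ≤ A * B :=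
    mul_le_mul_left (FractionalIdeal.spanSingleton_le_iff_mem.mpr ha) B
  have hne : FractionalIdeal.spanSingleton (nonZeroDivisors D) a * B ≠ 0 :=
    FI_mul_ne_zero (FractionalIdeal.spanSingleton_ne_zero_iff.mpr ha0) hB
  have h1 : a * b ∈ FractionalIdeal.spanSingleton (nonZeroDivisors D) a * s.star B :=
    FractionalIdeal.mul_mem_mul (FractionalIdeal.mem_spanSingleton_self _ a) hb
  rw [← s.star_smul a B ha0 hB] at h1
  exact s.star_mono _ _ hne (FI_mul_ne_zero hA hB) hsub h1

/-- The star of a nonzero ideal is nonzero. -/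
private lemma so_star_ne_zero (s : StarOperation D K) {A : FractionalIdeal (nonZeroDivisors D) K}
    (hA : A ≠ 0) : s.star A ≠ 0 := fun h0 =>
  hA (FractionalIdeal.le_zero_iff.mp (h0 ▸ s.le_star A hA))

/-- `star (A * star B) = star (A * B)`. -/
private lemma so_star_mul_star (s : StarOperation D K)
    {A B : FractionalIdeal (nonZeroDivisors D) K} (hA : A ≠ 0) (hB : B ≠ 0) :
    s.star (A * s.star B) = s.star (A * B) := by
  have hAB : A * B ≠ 0 := FI_mul_ne_zero hA hB
  have hsB : s.star B ≠ 0 := so_star_ne_zero s hB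
  have hAsB : A * s.star B ≠ 0 := FI_mul_ne_zero hA hsB
  apply le_antisymm
  · have h2 := s.star_mono _ _ hAsB (so_star_ne_zero s hAB) (mul_star_le s hA hB)
    rwa [s.star_star _ hAB] at h2
  · exact s.star_mono _ _ hAB hAsB (mul_le_mul_right (s.le_star B hB) A)

private lemma star_one_eq (s : StarOperation D K) :
    s.star (1 : FractionalIdeal (nonZeroDivisors D) K) = 1 := by
  have := s.star_principal (1 : K) one_ne_zero
  rwa [FractionalIdeal.spanSingleton_one] at this

/-- If `star A = 1` then `star (A ^ m) = 1`. -/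
private lemma star_pow_eq_one (s : StarOperation D K)
    {A : FractionalIdeal (nonZeroDivisors D) K} (hA : A ≠ 0)
    (h1 : s.star A = 1) (m : ℕ) : s.star (A ^ m) = 1 := by
  induction m with
  | zero => rw [pow_zero]; exact star_one_eq s
  | succ m ih =>
    have hAm : A ^ m ≠ 0 := FI_pow_ne_zero hA m
    rw [pow_succ, mul_comm, ← so_star_mul_star s hA hAm, ih, mul_one, h1]

/-- Each product of `s.card` elements of an ideal lies in the corresponding power. -/
private lemma prod_mem_pow_card {ι : Type*} (t : Finset ι) (x : ι → D) (I : Ideal D)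
    (hx : ∀ j ∈ t, x j ∈ I) : (∏ j ∈ t, x j) ∈ I ^ t.card := by
  have h := Ideal.prod_mem_prod (s := t) (I := fun _ => I) (x := x) hx
  rwa [Finset.prod_const] at h

private lemma span_pow_eq (S : Set D) (m : ℕ) :
    Ideal.span S ^ m = Ideal.span (S ^ m) := by
  induction m with
  | zero =>
    rw [pow_zero, pow_zero]
    simp [Ideal.one_eq_top, Ideal.span_one]
  | succ m ih => rw [pow_succ, ih, Ideal.span_mul_span', pow_succ]

/-- Pigeonhole: `I ^ (k n) ≤ (b₁ⁿ, …, b_kⁿ) * I ^ ((k-1) n)` for `I = (b₁, …, b_k)`. -/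
private lemma pow_le_span_pow_mul {k n : ℕ} (hk : 0 < k) (b : Fin k → D) :
    Ideal.span (Set.range b) ^ (k * n) ≤
      Ideal.span (Set.range fun i => b i ^ n) *
        Ideal.span (Set.range b) ^ ((k - 1) * n) := by
  classical
  rw [span_pow_eq]
  rw [Ideal.span_le]
  intro x hx
  rw [Set.mem_pow] at hx
  obtain ⟨f, rfl⟩ := hx
  have hchoice : ∀ j : Fin (k * n), ∃ i : Fin k, b i = (f j : D) := fun j => (f j).2
  choose g hg using hchoice
  have : Nonempty (Fin k) := ⟨⟨0, hk⟩⟩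
  obtain ⟨y, hy⟩ := Fintype.exists_le_card_fiber_of_mul_le_card g (n := n)
    (by simp [Fintype.card_fin])
  set t : Finset (Fin (k * n)) := Finset.univ.filter fun j => g j = y with ht
  have hprod : (List.ofFn fun j => (f j : D)).prod = ∏ j : Fin (k * n), (b (g j)) := by
    rw [List.prod_ofFn]
    exact Finset.prod_congr rfl fun j _ => (hg j).symm
  rw [hprod]
  have hsplit : (∏ j : Fin (k * n), b (g j)) =
      (∏ j ∈ t, b (g j)) * ∏ j ∈ Finset.univ.filter fun j => ¬ g j = y, b (g j) :=
    (Finset.prod_filter_mul_prod_filter_not Finset.univ _ _).symm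
  have htprod : (∏ j ∈ t, b (g j)) = b y ^ t.card := by
    rw [Finset.prod_congr rfl fun j hj => by
      rw [(Finset.mem_filter.mp hj).2], Finset.prod_const]
  have hcard : t.card + (Finset.univ.filter fun j => ¬ g j = y).card = k * n := by
    simpa using Finset.card_filter_add_card_filter_not
      (s := (Finset.univ : Finset (Fin (k * n)))) (p := fun j => g j = y)
  have hcle : t.card ≤ k * n := le_trans (Nat.le_add_right _ _) hcard.le
  have hIb : ∀ i, b i ∈ Ideal.span (Set.range b) := fun i =>
    Ideal.subset_span ⟨i, rfl⟩
  have hmem2 : b y ^ (t.card - n) * ∏ j ∈ Finset.univ.filter fun j => ¬ g j = y, b (g j) ∈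
      Ideal.span (Set.range b) ^ ((k - 1) * n) := by
    have e1 : b y ^ (t.card - n) ∈ Ideal.span (Set.range b) ^ (t.card - n) :=
      Ideal.pow_mem_pow (hIb y) _
    have e2 := prod_mem_pow_card (Finset.univ.filter fun j => ¬ g j = y)
      (fun j => b (g j)) (Ideal.span (Set.range b)) (fun j _ => hIb (g j))
    have e3 := Ideal.mul_mem_mul e1 e2
    rw [← pow_add] at e3
    have harith : t.card - n + (Finset.univ.filter fun j => ¬ g j = y).card
        = (k - 1) * n := by
      have hkn : (k - 1) * n = k * n - n := by
        obtain ⟨k', rfl⟩ := Nat.exists_eq_succ_of_ne_zero hk.ne'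
        simp [Nat.succ_sub_one, Nat.succ_mul]
      omega
    rwa [harith] at e3
  have hmem1 : b y ^ n ∈ Ideal.span (Set.range fun i => b i ^ n) :=
    Ideal.subset_span ⟨y, rfl⟩
  have hfinal := Ideal.mul_mem_mul hmem1 hmem2
  rw [hsplit, htprod]
  have hby : b y ^ t.card = b y ^ n * b y ^ (t.card - n) := by
    rw [← pow_add]
    congr 1
    omega
  rw [hby, mul_assoc]
  exact hfinal

end Helpers

theorem stmt12 (s : StarOperation D K) (P I : Ideal D)
    (h : s.IsAfgHomogeneous P I) :
    ∃ n : ℕ, 0 < n ∧ ∃ d : D,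
      s.star ((I ^ n : Ideal D) : FractionalIdeal (nonZeroDivisors D) K) =
        FractionalIdeal.spanSingleton (nonZeroDivisors D) (algebraMap D K d) := by
  classical
  obtain ⟨hInv, hHom, hcond⟩ := h
  obtain ⟨hI0, hFG, _, hIP, _⟩ := hHom
  obtain ⟨k, b, hb0⟩ := Submodule.fg_iff_exists_fin_generating_family.mp hFG
  have hb : Ideal.span (Set.range b) = I := hb0
  have hk : 0 < k := by
    rcases Nat.eq_zero_or_pos k with h0 | h0
    · exfalso
      apply hI0
      subst h0
      rw [← hb]
      simp
    · exact h0
  have hbI : ∀ i, b i ∈ I := fun i => hb ▸ Ideal.subset_span ⟨i, rfl⟩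
  have hbP : ∀ i, b i ∈ P := fun i => hIP (hbI i)
  -- the coercion of I is nonzero
  have hX0 : (I : FractionalIdeal (nonZeroDivisors D) K) ≠ 0 :=
    FractionalIdeal.coeIdeal_ne_zero.mpr hI0
  -- apply the afg condition
  have hr : ∃ r : ℕ, 0 < r ∧
      ((I ^ r : Ideal D) : FractionalIdeal (nonZeroDivisors D) K) ≤
        s.star ((Ideal.span (Set.range b) : Ideal D) :
          FractionalIdeal (nonZeroDivisors D) K) := by
    refine ⟨1, one_pos, ?_⟩
    rw [pow_one, hb]
    exact s.le_star _ hX0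
  obtain ⟨n, hn, d, hd⟩ := hcond k b hbP hr
  refine ⟨n, hn, d, ?_⟩
  set J : Ideal D := Ideal.span (Set.range fun i => b i ^ n) with hJ
  -- J is nonzero
  have hbne : ∃ i, b i ≠ 0 := by
    by_contra hall
    push_neg at hall
    apply hI0
    rw [← hb]
    refine le_antisymm (Ideal.span_le.mpr ?_) bot_le
    rintro x ⟨i, rfl⟩
    simp [hall i]
  obtain ⟨i0, hi0⟩ := hbne
  have hJ0 : J ≠ ⊥ := by
    rw [Submodule.ne_bot_iff]
    exact ⟨b i0 ^ n, Ideal.subset_span ⟨i0, rfl⟩, pow_ne_zero _ hi0⟩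
  have hJc0 : (J : FractionalIdeal (nonZeroDivisors D) K) ≠ 0 :=
    FractionalIdeal.coeIdeal_ne_zero.mpr hJ0
  -- notation
  set X : FractionalIdeal (nonZeroDivisors D) K := (I : FractionalIdeal (nonZeroDivisors D) K)
    with hXdef
  set C : FractionalIdeal (nonZeroDivisors D) K := X⁻¹ with hC
  have hIC : s.star (X * C) = 1 := hInv
  have hC0 : C ≠ 0 := by
    intro h0
    have h1m : (1 : K) ∈ C := by
      rw [hC, FractionalIdeal.mem_inv_iff hX0]
      intro y hy
      rw [one_mul]
      exact FractionalIdeal.coeIdeal_le_one hy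
    rw [h0] at h1m
    exact one_ne_zero ((FractionalIdeal.mem_zero_iff _).mp h1m)
  have hXC0 : X * C ≠ 0 := FI_mul_ne_zero hX0 hC0
  set m : ℕ := (k - 1) * n with hm
  have hnm : n + m = k * n := by
    obtain ⟨k', rfl⟩ := Nat.exists_eq_succ_of_ne_zero hk.ne'
    simp [hm, Nat.succ_sub_one, Nat.succ_mul, Nat.add_comm]
  -- key ideal inequality moved to fractional ideals
  have hkey : X ^ (k * n) ≤ (J : FractionalIdeal (nonZeroDivisors D) K) * X ^ m := by
    have h1 := pow_le_span_pow_mul (D := D) hk (n := n) b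
    rw [hb] at h1
    calc X ^ (k * n) = ((I ^ (k * n) : Ideal D) : FractionalIdeal (nonZeroDivisors D) K) := by
          rw [FractionalIdeal.coeIdeal_pow]
      _ ≤ ((J * I ^ m : Ideal D) : FractionalIdeal (nonZeroDivisors D) K) := by
          rw [FractionalIdeal.coeIdeal_le_coeIdeal]
          exact h1
      _ = (J : FractionalIdeal (nonZeroDivisors D) K) * X ^ m := by
          rw [FractionalIdeal.coeIdeal_mul, FractionalIdeal.coeIdeal_pow]
  -- J ≤ I ^ n
  have hJIn : (J : FractionalIdeal (nonZeroDivisors D) K) ≤ X ^ n := by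
    have hcoe : ((I ^ n : Ideal D) : FractionalIdeal (nonZeroDivisors D) K) = X ^ n :=
      by rw [FractionalIdeal.coeIdeal_pow]
    rw [← hcoe, FractionalIdeal.coeIdeal_le_coeIdeal]
    rw [hJ, Ideal.span_le]
    rintro x ⟨i, rfl⟩
    exact Ideal.pow_mem_pow (hbI i) n
  have hXn0 : X ^ n ≠ 0 := FI_pow_ne_zero hX0 n
  have hXCm0 : (X * C) ^ m ≠ 0 := FI_pow_ne_zero hXC0 m
  have hXCm1 : s.star ((X * C) ^ m) = 1 := star_pow_eq_one s hXC0 hIC m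
  have hCm0 : C ^ m ≠ 0 := FI_pow_ne_zero hC0 m
  -- main chain
  have hmain : s.star (X ^ n) = s.star (J : FractionalIdeal (nonZeroDivisors D) K) := by
    apply le_antisymm
    · calc s.star (X ^ n) = s.star (X ^ n * s.star ((X * C) ^ m)) := by
            rw [hXCm1, mul_one]
        _ = s.star (X ^ n * (X * C) ^ m) := so_star_mul_star s hXn0 hXCm0
        _ = s.star (X ^ (k * n) * C ^ m) := by
            rw [mul_pow, ← mul_assoc, ← pow_add, hnm]
        _ ≤ s.star ((J : FractionalIdeal (nonZeroDivisors D) K) * X ^ m * C ^ m) := by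
            apply s.star_mono
            · exact FI_mul_ne_zero (FI_pow_ne_zero hX0 _) hCm0
            · exact FI_mul_ne_zero (FI_mul_ne_zero hJc0 (FI_pow_ne_zero hX0 m)) hCm0
            · exact mul_le_mul_left hkey _
        _ = s.star ((J : FractionalIdeal (nonZeroDivisors D) K) * (X * C) ^ m) := by
            rw [mul_assoc, mul_pow]
        _ = s.star ((J : FractionalIdeal (nonZeroDivisors D) K) * s.star ((X * C) ^ m)) :=
            (so_star_mul_star s hJc0 hXCm0).symm
        _ = s.star (J : FractionalIdeal (nonZeroDivisors D) K) := by
            rw [hXCm1, mul_one]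
    · exact s.star_mono _ _ hJc0 hXn0 hJIn
  rw [← FractionalIdeal.coeIdeal_pow] at hmain
  rw [hmain]
  exact hd
end

section
/- Let ∗ be a finite character star-operation on a domain D. If D is a ∗-almost IRKT, then D is an AGCD-domain if and only if D is a ∗-almost Bézout domain. -/
open FractionalIdeal

variable (D : Type*) (K : Type*) [CommRing D] [IsDomain D] [Field K] [Algebra D K]
  [IsFractionRing D K]

variable {D : Type*} {K : Type*} [CommRing D] [IsDomain D] [Field K] [Algebra D K]
  [IsFractionRing D K]

open StarOperation

section AuxLemmas
set_option linter.unusedSectionVars false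

variable (s : StarOperation D K)

local notation "FI" => FractionalIdeal (nonZeroDivisors D) K

lemma aux_exists_ne_zero {A : FI} (hA : A ≠ 0) : ∃ x ∈ A, x ≠ (0 : K) := by
  by_contra h
  push_neg at h
  exact hA (FractionalIdeal.eq_zero_iff.mpr h)

lemma aux_mul_ne_zero {A B : FI} (hA : A ≠ 0) (hB : B ≠ 0) : A * B ≠ 0 := by
  obtain ⟨x, hx, hx0⟩ := aux_exists_ne_zero hA
  obtain ⟨y, hy, hy0⟩ := aux_exists_ne_zero hB
  intro h
  have hxy : x * y ∈ (0 : FI) := h ▸ FractionalIdeal.mul_mem_mul hx hy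
  exact mul_ne_zero hx0 hy0 ((FractionalIdeal.mem_zero_iff _).mp hxy)

lemma aux_star_one : s.star 1 = 1 := by
  rw [← FractionalIdeal.spanSingleton_one]
  exact s.star_principal 1 one_ne_zero

lemma aux_star_le_one {A : FI} (hA : A ≠ 0) (h : A ≤ 1) : s.star A ≤ 1 := by
  have := s.star_mono A 1 hA one_ne_zero h
  rwa [aux_star_one] at this

lemma aux_mul_star_le (A B : FI) (hA : A ≠ 0) (hB : B ≠ 0) :
    A * s.star B ≤ s.star (A * B) := by
  rw [FractionalIdeal.mul_le]
  intro i hi j hj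
  rcases eq_or_ne i 0 with rfl | hi0
  · rw [zero_mul]
    exact zero_mem _
  have h1 : i * j ∈ FractionalIdeal.spanSingleton (nonZeroDivisors D) i * s.star B :=
    FractionalIdeal.mul_mem_mul (FractionalIdeal.mem_spanSingleton_self _ i) hj
  rw [← s.star_smul i B hi0 hB] at h1
  have hle : FractionalIdeal.spanSingleton (nonZeroDivisors D) i * B ≤ A * B :=
    mul_le_mul_left (FractionalIdeal.spanSingleton_le_iff_mem.mpr hi) B
  exact s.star_mono _ _ (aux_mul_ne_zero (FractionalIdeal.spanSingleton_ne_zero_iff.mpr hi0) hB)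
    (aux_mul_ne_zero hA hB) hle h1

lemma aux_inj : Function.Injective (algebraMap D K) := IsFractionRing.injective D K

lemma aux_mem_coeIdeal_of_mem {I : Ideal D} {u : D} (hu : u ∈ I) :
    algebraMap D K u ∈ (I : FI) :=
  (FractionalIdeal.mem_coeIdeal _).mpr ⟨u, hu, rfl⟩

lemma aux_mem_of_coe_mem {I : Ideal D} {u : D} (hu : algebraMap D K u ∈ (I : FI)) :
    u ∈ I := by
  obtain ⟨v, hv, hveq⟩ := (FractionalIdeal.mem_coeIdeal _).mp hu
  rwa [← aux_inj hveq]

lemma aux_finset_in_chain (c : Set (Ideal D)) (hchain : IsChain (· ≤ ·) c)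
    (J₀ : Ideal D) (hJ₀ : J₀ ∈ c) (T : Finset K)
    (hT : ∀ g ∈ T, g ∈ ((sSup c : Ideal D) : FI)) :
    ∃ J ∈ c, ∀ g ∈ T, g ∈ ((J : Ideal D) : FI) := by
  classical
  induction T using Finset.induction with
  | empty => exact ⟨J₀, hJ₀, by simp⟩
  | @insert g T hg ih =>
    obtain ⟨J₁, hJ₁c, hJ₁⟩ := ih fun x hx => hT x (Finset.mem_insert_of_mem hx)
    obtain ⟨u, hu, hueq⟩ := (FractionalIdeal.mem_coeIdeal _).mp (hT g (Finset.mem_insert_self g T))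
    obtain ⟨J₂, hJ₂c, hJ₂⟩ := (Submodule.mem_sSup_of_directed ⟨J₀, hJ₀⟩ hchain.directedOn).mp hu
    rcases hchain.total hJ₁c hJ₂c with hle | hle
    · refine ⟨J₂, hJ₂c, fun x hx => ?_⟩
      rcases Finset.mem_insert.mp hx with rfl | hx
      · exact hueq ▸ aux_mem_coeIdeal_of_mem hJ₂
      · exact (FractionalIdeal.coeIdeal_le_coeIdeal K).mpr hle (hJ₁ x hx)
    · refine ⟨J₁, hJ₁c, fun x hx => ?_⟩
      rcases Finset.mem_insert.mp hx with rfl | hx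
      · exact hueq ▸ aux_mem_coeIdeal_of_mem (hle hJ₂)
      · exact hJ₁ x hx

lemma aux_prime (P : Ideal D) (hPtop : P ≠ ⊤) (hPstar : s.IsStarIdeal P) (hP0 : P ≠ ⊥)
    (hmax : ∀ J : Ideal D, J ≠ ⊤ → s.IsStarIdeal J → P ≤ J → J = P) : P.IsPrime := by
  refine ⟨hPtop, ?_⟩
  intro x y hxy
  by_contra hcon
  push_neg at hcon
  obtain ⟨hx, hy⟩ := hcon
  have hx0 : x ≠ 0 := fun h => hx (h ▸ P.zero_mem)
  have hy0 : y ≠ 0 := fun h => hy (h ▸ P.zero_mem)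
  set T : Ideal D := P ⊔ Ideal.span {x} with hTdef
  have hxT : x ∈ T := Ideal.mem_sup_right (Ideal.subset_span rfl)
  have hT0 : (T : FI) ≠ 0 :=
    FractionalIdeal.coeIdeal_ne_zero.mpr fun h => hx0 (by rw [h] at hxT; simpa using hxT)
  have hP0' : (P : FI) ≠ 0 := FractionalIdeal.coeIdeal_ne_zero.mpr hP0
  have hsT1 : s.star (T : FI) ≤ 1 := aux_star_le_one s hT0 FractionalIdeal.coeIdeal_le_one
  obtain ⟨T', hT'⟩ := FractionalIdeal.le_one_iff_exists_coeIdeal.mp hsT1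
  have hTT' : (T : FI) ≤ (T' : FI) := hT' ▸ s.le_star _ hT0
  have hPT' : P ≤ T' := le_trans le_sup_left ((FractionalIdeal.coeIdeal_le_coeIdeal K).mp hTT')
  have hT'star : s.IsStarIdeal T' := by
    unfold StarOperation.IsStarIdeal
    rw [hT']
    exact s.star_star _ hT0
  by_cases hT'top : T' = ⊤
  · -- star (coe T) = 1
    have hstar1 : s.star (T : FI) = 1 := by rw [← hT', hT'top, FractionalIdeal.coeIdeal_top]
    have hymem : algebraMap D K y ∈
        FractionalIdeal.spanSingleton (nonZeroDivisors D) (algebraMap D K y) * s.star (T : FI) := by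
      rw [hstar1, mul_one]
      exact FractionalIdeal.mem_spanSingleton_self _ _
    have hy0' : algebraMap D K y ≠ 0 := fun hc => hy0 (aux_inj (hc.trans (map_zero (algebraMap D K)).symm))
    rw [← s.star_smul _ _ hy0' hT0] at hymem
    have hmul : Ideal.span {y} * T ≤ P := by
      rw [Ideal.mul_le]
      intro r hr q hq
      obtain ⟨cr, hcr⟩ := Ideal.mem_span_singleton'.mp hr
      obtain ⟨p, hp, e, he, hpe⟩ := Submodule.mem_sup.mp hq
      obtain ⟨ce, hce⟩ := Ideal.mem_span_singleton'.mp he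
      have : r * q = (cr * y) * p + (cr * ce) * (x * y) := by
        rw [← hcr, ← hpe, ← hce]; ring
      rw [this]
      exact P.add_mem (Ideal.mul_mem_left _ _ hp) (Ideal.mul_mem_left _ _ hxy)
    have hle : FractionalIdeal.spanSingleton (nonZeroDivisors D) (algebraMap D K y) * (T : FI)
        ≤ (P : FI) := by
      rw [← FractionalIdeal.coeIdeal_span_singleton, ← FractionalIdeal.coeIdeal_mul]
      exact (FractionalIdeal.coeIdeal_le_coeIdeal K).mpr hmul
    have := s.star_mono _ _
      (aux_mul_ne_zero (FractionalIdeal.spanSingleton_ne_zero_iff.mpr hy0') hT0) hP0' hle hymem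
    rw [hPstar] at this
    exact hy (aux_mem_of_coe_mem this)
  · have heq := hmax T' hT'top hT'star hPT'
    exact hx (heq ▸ (FractionalIdeal.coeIdeal_le_coeIdeal K).mp hTT' hxT)

lemma aux_exists_max (I : Ideal D) (h0 : I ≠ ⊥) (h1 : I ≠ ⊤) (hst : s.IsStarIdeal I) :
    ∃ P : Ideal D, s.IsMaxStarIdeal P ∧ I ≤ P := by
  set 𝒮 : Set (Ideal D) := {J | J ≠ ⊤ ∧ s.IsStarIdeal J ∧ I ≤ J} with h𝒮
  have hchainub : ∀ c ⊆ 𝒮, IsChain (· ≤ ·) c → ∀ y ∈ c, ∃ ub ∈ 𝒮, ∀ z ∈ c, z ≤ ub := by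
    intro c hc𝒮 hchain J₀ hJ₀
    have hUtop : sSup c ≠ ⊤ := by
      intro htop
      have h1U : (1 : D) ∈ sSup c := htop ▸ Submodule.mem_top
      obtain ⟨J, hJc, hJ1⟩ := (Submodule.mem_sSup_of_directed ⟨J₀, hJ₀⟩ hchain.directedOn).mp h1U
      exact (hc𝒮 hJc).1 ((Ideal.eq_top_iff_one J).mpr hJ1)
    have hU0 : ((sSup c : Ideal D) : FI) ≠ 0 :=
      FractionalIdeal.coeIdeal_ne_zero.mpr fun hb =>
        h0 (le_bot_iff.mp (hb ▸ le_trans (hc𝒮 hJ₀).2.2 (le_sSup hJ₀)))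
    refine ⟨sSup c, ⟨hUtop, ?_, le_trans (hc𝒮 hJ₀).2.2 (le_sSup hJ₀)⟩, fun z hz => le_sSup hz⟩
    refine le_antisymm ?_ (s.le_star _ hU0)
    intro w hw
    obtain ⟨B, hB0, hBle, hBfg, hwB⟩ := s.finite_character _ hU0 w hw
    obtain ⟨T, hTspan⟩ := hBfg
    have hTU : ∀ g ∈ T, g ∈ ((sSup c : Ideal D) : FI) := fun g hg =>
      hBle (FractionalIdeal.mem_coe.mp (hTspan ▸ Submodule.subset_span hg))
    obtain ⟨J, hJc, hJT⟩ := aux_finset_in_chain c hchain J₀ hJ₀ T hTU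
    have hBJ : B ≤ (J : FI) := by
      rw [← FractionalIdeal.coe_le_coe, ← hTspan]
      exact Submodule.span_le.mpr fun g hg => FractionalIdeal.mem_coe.mpr (hJT g hg)
    have hJ0 : (J : FI) ≠ 0 :=
      FractionalIdeal.coeIdeal_ne_zero.mpr fun hb =>
        h0 (le_bot_iff.mp (hb ▸ (hc𝒮 hJc).2.2))
    have := s.star_mono B _ hB0 hJ0 hBJ hwB
    rw [(hc𝒮 hJc).2.1] at this
    exact (FractionalIdeal.coeIdeal_le_coeIdeal K).mpr (le_sSup hJc) this
  obtain ⟨P, hIP, hP𝒮, hPmax⟩ := zorn_le_nonempty₀ 𝒮 hchainub I ⟨h1, hst, le_rfl⟩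
  have hP0 : P ≠ ⊥ := fun hb => h0 (le_bot_iff.mp (hb ▸ hIP))
  have hmax' : ∀ J : Ideal D, J ≠ ⊤ → s.IsStarIdeal J → P ≤ J → J = P := fun J hJt hJs hPJ =>
    le_antisymm (hPmax ⟨hJt, hJs, le_trans hIP hPJ⟩ hPJ) hPJ
  exact ⟨P, ⟨hP0, hP𝒮.1, aux_prime s P hP𝒮.1 hP𝒮.2.1 hP0 hmax', hP𝒮.2.1, hmax'⟩, hIP⟩

lemma aux_map_ne_zero {u : D} (hu : u ≠ 0) : algebraMap D K u ≠ 0 :=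
  fun hc => hu (aux_inj (hc.trans (map_zero (algebraMap D K)).symm))

lemma aux_one_mem_inv {X : FI} (hX0 : X ≠ 0) (hX1 : X ≤ 1) : (1 : K) ∈ X⁻¹ := by
  rw [FractionalIdeal.inv_eq]
  exact (FractionalIdeal.mem_div_iff_of_ne_zero hX0).mpr fun y hy => by
    rw [one_mul]; exact hX1 hy

lemma aux_inv_ne_zero {X : FI} (hX0 : X ≠ 0) (hX1 : X ≤ 1) : X⁻¹ ≠ 0 := fun h => by
  have := aux_one_mem_inv hX0 hX1
  rw [h] at this
  exact one_ne_zero ((FractionalIdeal.mem_zero_iff _).mp this)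

lemma aux_le_inv_inv {X : FI} (hX0 : X ≠ 0) (hX1 : X ≤ 1) : X ≤ (X⁻¹)⁻¹ := by
  refine SetLike.le_def.mpr fun x hx => ?_
  refine (FractionalIdeal.mem_inv_iff (aux_inv_ne_zero hX0 hX1)).mpr fun y hy => ?_
  rw [mul_comm]
  exact (FractionalIdeal.mem_inv_iff hX0).mp hy x hx

lemma aux_mul_inv_le_one {X : FI} (hX0 : X ≠ 0) : X * X⁻¹ ≤ 1 :=
  FractionalIdeal.mul_le.mpr fun i hi j hj =>
    mul_comm i j ▸ (FractionalIdeal.mem_inv_iff hX0).mp hj i hi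

lemma aux_av (P : Ideal D) (hP : P.IsPrime) (hAV : AVAtPrime P hP) (a b : D)
    (ha : a ≠ 0) (hb : b ≠ 0) :
    ∃ m : ℕ, 0 < m ∧ ((∃ c t, t ∉ P ∧ t * b ^ m = a ^ m * c) ∨
      (∃ c t, t ∉ P ∧ t * a ^ m = b ^ m * c)) := by
  haveI := hP
  set L := Localization P.primeCompl with hL
  have hinj : Function.Injective (algebraMap D L) :=
    IsLocalization.injective L P.primeCompl_le_nonZeroDivisors
  have ha' : algebraMap D L a ≠ 0 :=
    fun hc => ha (hinj (hc.trans (map_zero (algebraMap D L)).symm))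
  have hb' : algebraMap D L b ≠ 0 :=
    fun hc => hb (hinj (hc.trans (map_zero (algebraMap D L)).symm))
  obtain ⟨n, hn, hdvd⟩ := hAV (algebraMap D L a) (algebraMap D L b) ha' hb'
  refine ⟨n, hn, ?_⟩
  rcases hdvd with ⟨q, hq⟩ | ⟨q, hq⟩
  · left
    obtain ⟨⟨c, t⟩, hmk⟩ := IsLocalization.mk'_surjective P.primeCompl q
    refine ⟨c, t, t.2, hinj ?_⟩
    rw [_root_.map_mul, _root_.map_mul, map_pow, map_pow, hq, ← hmk]
    rw [mul_comm ((algebraMap D L) ↑t), mul_assoc, IsLocalization.mk'_spec _ c t]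
  · right
    obtain ⟨⟨c, t⟩, hmk⟩ := IsLocalization.mk'_surjective P.primeCompl q
    refine ⟨c, t, t.2, hinj ?_⟩
    rw [_root_.map_mul, _root_.map_mul, map_pow, map_pow, hq, ← hmk]
    rw [mul_comm ((algebraMap D L) ↑t), mul_assoc, IsLocalization.mk'_spec _ c t]

lemma aux_star_eq_of_invertible {X : FI} (hX0 : X ≠ 0) (hX1 : X ≤ 1)
    (hinv : s.star (X * X⁻¹) = 1) {z : K} (hd : (X⁻¹)⁻¹ = FractionalIdeal.spanSingleton (nonZeroDivisors D) z) :
    s.star X = FractionalIdeal.spanSingleton (nonZeroDivisors D) z := by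
  have hXinv0 : X⁻¹ ≠ 0 := aux_inv_ne_zero hX0 hX1
  have hXle : X ≤ FractionalIdeal.spanSingleton (nonZeroDivisors D) z :=
    hd ▸ aux_le_inv_inv hX0 hX1
  have hz0 : z ≠ 0 := by
    intro hz
    rw [hz, FractionalIdeal.spanSingleton_zero] at hXle
    exact hX0 (le_bot_iff.mp hXle)
  have hspan0 : FractionalIdeal.spanSingleton (nonZeroDivisors D) z ≠ 0 :=
    FractionalIdeal.spanSingleton_ne_zero_iff.mpr hz0
  have hY0 : X * X⁻¹ ≠ 0 := aux_mul_ne_zero hX0 hXinv0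
  refine le_antisymm ?_ ?_
  · have := s.star_mono X _ hX0 hspan0 hXle
    rwa [s.star_principal z hz0] at this
  · have hzmem : z ∈ (X⁻¹)⁻¹ := hd ▸ FractionalIdeal.mem_spanSingleton_self _ z
    have h1 : FractionalIdeal.spanSingleton (nonZeroDivisors D) z * X⁻¹ ≤ 1 := by
      refine FractionalIdeal.mul_le.mpr fun i hi j hj => ?_
      obtain ⟨c, rfl⟩ := (FractionalIdeal.mem_spanSingleton _).mp hi
      have hdj : z * j ∈ (1 : FI) := (FractionalIdeal.mem_inv_iff hXinv0).mp hzmem j hj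
      obtain ⟨r, hr⟩ := (FractionalIdeal.mem_one_iff _).mp hdj
      refine (FractionalIdeal.mem_one_iff _).mpr ⟨c * r, ?_⟩
      rw [smul_mul_assoc, ← hr, Algebra.smul_def, ← _root_.map_mul]
    have h2 : FractionalIdeal.spanSingleton (nonZeroDivisors D) z * (X * X⁻¹) ≤ X := by
      rw [mul_comm X X⁻¹, ← mul_assoc]
      calc FractionalIdeal.spanSingleton (nonZeroDivisors D) z * X⁻¹ * X ≤ 1 * X :=
            mul_le_mul_left h1 X
        _ = X := one_mul X
    have h3 := s.star_mono _ _ (aux_mul_ne_zero hspan0 hY0) hX0 h2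
    rw [s.star_smul z _ hz0 hY0, hinv, mul_one] at h3
    exact h3

lemma aux_inv_of_star_principal {X : FI} (hX0 : X ≠ 0) (hX1 : X ≤ 1) {z : K}
    (hstar : s.star X = FractionalIdeal.spanSingleton (nonZeroDivisors D) z) :
    X⁻¹ = FractionalIdeal.spanSingleton (nonZeroDivisors D) z⁻¹ := by
  have hXle : X ≤ FractionalIdeal.spanSingleton (nonZeroDivisors D) z :=
    hstar ▸ s.le_star X hX0
  have hz0 : z ≠ 0 := by
    intro hz
    rw [hz, FractionalIdeal.spanSingleton_zero] at hXle
    exact hX0 (le_bot_iff.mp hXle)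
  refine le_antisymm ?_ ?_
  · refine SetLike.le_def.mpr fun w hw => ?_
    rcases eq_or_ne w 0 with rfl | hw0
    · exact (FractionalIdeal.mem_spanSingleton _).mpr ⟨0, zero_smul _ _⟩
    have hwX : ∀ y ∈ X, w * y ∈ (1 : FI) := (FractionalIdeal.mem_inv_iff hX0).mp hw
    have hspanw0 : FractionalIdeal.spanSingleton (nonZeroDivisors D) w ≠ 0 :=
      FractionalIdeal.spanSingleton_ne_zero_iff.mpr hw0
    have hle1 : FractionalIdeal.spanSingleton (nonZeroDivisors D) w * X ≤ 1 := by
      refine FractionalIdeal.mul_le.mpr fun i hi j hj => ?_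
      obtain ⟨c, rfl⟩ := (FractionalIdeal.mem_spanSingleton _).mp hi
      obtain ⟨r, hr⟩ := (FractionalIdeal.mem_one_iff _).mp (hwX j hj)
      refine (FractionalIdeal.mem_one_iff _).mpr ⟨c * r, ?_⟩
      rw [smul_mul_assoc, ← hr, Algebra.smul_def, ← _root_.map_mul]
    have hstar' := s.star_smul w X hw0 hX0
    rw [hstar, FractionalIdeal.spanSingleton_mul_spanSingleton] at hstar'
    have hle2 := aux_star_le_one s (aux_mul_ne_zero hspanw0 hX0) hle1
    rw [hstar'] at hle2
    have hwz : w * z ∈ (1 : FI) := hle2 (FractionalIdeal.mem_spanSingleton_self _ _)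
    obtain ⟨r, hr⟩ := (FractionalIdeal.mem_one_iff _).mp hwz
    refine (FractionalIdeal.mem_spanSingleton _).mpr ⟨r, ?_⟩
    rw [Algebra.smul_def, hr]
    field_simp
  · rw [FractionalIdeal.spanSingleton_le_iff_mem, FractionalIdeal.inv_eq]
    refine (FractionalIdeal.mem_div_iff_of_ne_zero hX0).mpr fun y hy => ?_
    obtain ⟨c, rfl⟩ := (FractionalIdeal.mem_spanSingleton _).mp (hXle hy)
    refine (FractionalIdeal.mem_one_iff _).mpr ⟨c, ?_⟩
    rw [Algebra.smul_def]
    field_simp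

end AuxLemmas
theorem stmt14 (s : StarOperation D K) (h : s.IsAlmostIRKT) :
    IsAGCDDomain D K ↔ s.IsAlmostBezout := by
  constructor
  · intro hAGCD a b ha hb
    classical
    set S : Set (Ideal D) := {P | s.IsMaxStarIdeal P ∧ a ∈ P ∧ b ∈ P} with hSdef
    have hSfin : S.Finite := by
      by_cases hu : IsUnit a
      · have : S = ∅ := by
          ext P
          simp only [hSdef, Set.mem_setOf_eq, Set.mem_empty_iff_false, iff_false]
          rintro ⟨hPmax, haP, -⟩
          exact hPmax.2.1 (Ideal.eq_top_of_isUnit_mem P haP hu)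
        rw [this]; exact Set.finite_empty
      · exact (h.1.1 a ha hu).subset fun P hP => ⟨hP.1, hP.2.1⟩
    have hchoice : ∀ P : Ideal D, ∃ m : ℕ, 0 < m ∧ (P ∈ S →
        ((∃ c t, t ∉ P ∧ t * b ^ m = a ^ m * c) ∨ (∃ c t, t ∉ P ∧ t * a ^ m = b ^ m * c))) := by
      intro P
      by_cases hP : P ∈ S
      · obtain ⟨hPmax, haP, hbP⟩ := hP
        obtain ⟨m, hm, hdvd⟩ := aux_av P hPmax.2.2.1 (h.2 P hPmax) a b ha hb
        exact ⟨m, hm, fun _ => hdvd⟩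
      · exact ⟨1, one_pos, fun hc => absurd hc hP⟩
    choose m hmpos hmdvd using hchoice
    set m₀ : ℕ := ∏ P ∈ hSfin.toFinset, m P with hm₀def
    have hm₀pos : 0 < m₀ := Finset.prod_pos fun P _ => hmpos P
    obtain ⟨r, hr, d, hd⟩ := hAGCD (a ^ m₀) (b ^ m₀) (pow_ne_zero _ ha) (pow_ne_zero _ hb)
    rw [← pow_mul, ← pow_mul] at hd
    set N : ℕ := m₀ * r with hNdef
    have hNpos : 0 < N := Nat.mul_pos hm₀pos hr
    set X : FractionalIdeal (nonZeroDivisors D) K :=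
      ((Ideal.span {a ^ N, b ^ N} : Ideal D) : FractionalIdeal (nonZeroDivisors D) K) with hXdef
    have haN : (a : D) ^ N ∈ Ideal.span {a ^ N, b ^ N} :=
      Ideal.subset_span (Set.mem_insert _ _)
    have hbN : (b : D) ^ N ∈ Ideal.span {a ^ N, b ^ N} :=
      Ideal.subset_span (Set.mem_insert_of_mem _ rfl)
    have hX0 : X ≠ 0 := by
      refine FractionalIdeal.coeIdeal_ne_zero.mpr fun hbot => ?_
      have hmem := haN
      rw [hbot] at hmem
      exact pow_ne_zero N ha (by simpa using hmem)
    have hX1 : X ≤ 1 := FractionalIdeal.coeIdeal_le_one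
    have hXinv0 : X⁻¹ ≠ 0 := aux_inv_ne_zero hX0 hX1
    have haX : algebraMap D K (a ^ N) ∈ X := aux_mem_coeIdeal_of_mem haN
    have hbX : algebraMap D K (b ^ N) ∈ X := aux_mem_coeIdeal_of_mem hbN
    have hinv : s.star (X * X⁻¹) = 1 := by
      by_contra hne
      have hY1 : X * X⁻¹ ≤ 1 := aux_mul_inv_le_one hX0
      have hY0 : X * X⁻¹ ≠ 0 := aux_mul_ne_zero hX0 hXinv0
      have hsY1 : s.star (X * X⁻¹) ≤ 1 := aux_star_le_one s hY0 hY1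
      obtain ⟨IY, hIY⟩ := FractionalIdeal.le_one_iff_exists_coeIdeal.mp hsY1
      have hIY0 : IY ≠ ⊥ := by
        intro hbot
        have hle := s.le_star _ hY0
        rw [← hIY, hbot, FractionalIdeal.coeIdeal_bot] at hle
        exact hY0 (le_bot_iff.mp hle)
      have hIYtop : IY ≠ ⊤ := fun htop => hne (by rw [← hIY, htop, FractionalIdeal.coeIdeal_top])
      have hIYstar : s.IsStarIdeal IY := by
        unfold StarOperation.IsStarIdeal
        rw [hIY]
        exact s.star_star _ hY0
      obtain ⟨P, hPmax, hIYP⟩ := aux_exists_max s IY hIY0 hIYtop hIYstar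
      have hYP : X * X⁻¹ ≤ (P : FractionalIdeal (nonZeroDivisors D) K) :=
        le_trans (hIY ▸ s.le_star _ hY0) ((FractionalIdeal.coeIdeal_le_coeIdeal K).mpr hIYP)
      by_cases haP : a ∈ P
      · by_cases hbP : b ∈ P
        · have hPS : P ∈ S := ⟨hPmax, haP, hbP⟩
          have hmdvdN : m P ∣ N :=
            Dvd.dvd.mul_right (Finset.dvd_prod_of_mem m (hSfin.mem_toFinset.mpr hPS)) r
          obtain ⟨k, hk⟩ := hmdvdN
          rcases hmdvd P hPS with ⟨c, t, htP, heq⟩ | ⟨c, t, htP, heq⟩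
          · have heqN : t ^ k * b ^ N = a ^ N * c ^ k := by
              have h2 := congrArg (· ^ k) heq
              simpa only [mul_pow, ← pow_mul, ← hk] using h2
            have haN0 : algebraMap D K (a ^ N) ≠ 0 := aux_map_ne_zero (pow_ne_zero N ha)
            set z : K := algebraMap D K (t ^ k) / algebraMap D K (a ^ N) with hzdef
            have hz_a : z * algebraMap D K (a ^ N) = algebraMap D K (t ^ k) :=
              div_mul_cancel₀ _ haN0
            have hz_b : z * algebraMap D K (b ^ N) = algebraMap D K (c ^ k) := by
              rw [hzdef, div_mul_eq_mul_div, div_eq_iff haN0, ← _root_.map_mul, ← _root_.map_mul]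
              exact congrArg _ (heqN.trans (mul_comm _ _))
            have hzX : z ∈ X⁻¹ := by
              rw [FractionalIdeal.inv_eq]
              refine (FractionalIdeal.mem_div_iff_of_ne_zero hX0).mpr fun y hy => ?_
              obtain ⟨w, hwmem, rfl⟩ := (FractionalIdeal.mem_coeIdeal _).mp hy
              obtain ⟨c₁, c₂, hc⟩ := Ideal.mem_span_pair.mp hwmem
              refine (FractionalIdeal.mem_one_iff _).mpr ⟨c₁ * t ^ k + c₂ * c ^ k, ?_⟩
              rw [_root_.map_add, _root_.map_mul, _root_.map_mul, ← hz_a, ← hz_b, ← hc, _root_.map_add,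
                _root_.map_mul, _root_.map_mul]
              ring
            have hmem : algebraMap D K (t ^ k) ∈ (P : FractionalIdeal (nonZeroDivisors D) K) := by
              refine hYP ?_
              rw [← hz_a, mul_comm z]
              exact FractionalIdeal.mul_mem_mul haX hzX
            exact htP (hPmax.2.2.1.mem_of_pow_mem k (aux_mem_of_coe_mem hmem))
          · have heqN : t ^ k * a ^ N = b ^ N * c ^ k := by
              have h2 := congrArg (· ^ k) heq
              simpa only [mul_pow, ← pow_mul, ← hk] using h2
            have hbN0 : algebraMap D K (b ^ N) ≠ 0 := aux_map_ne_zero (pow_ne_zero N hb)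
            set z : K := algebraMap D K (t ^ k) / algebraMap D K (b ^ N) with hzdef
            have hz_b : z * algebraMap D K (b ^ N) = algebraMap D K (t ^ k) :=
              div_mul_cancel₀ _ hbN0
            have hz_a : z * algebraMap D K (a ^ N) = algebraMap D K (c ^ k) := by
              rw [hzdef, div_mul_eq_mul_div, div_eq_iff hbN0, ← _root_.map_mul, ← _root_.map_mul]
              exact congrArg _ (heqN.trans (mul_comm _ _))
            have hzX : z ∈ X⁻¹ := by
              rw [FractionalIdeal.inv_eq]
              refine (FractionalIdeal.mem_div_iff_of_ne_zero hX0).mpr fun y hy => ?_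
              obtain ⟨w, hwmem, rfl⟩ := (FractionalIdeal.mem_coeIdeal _).mp hy
              obtain ⟨c₁, c₂, hc⟩ := Ideal.mem_span_pair.mp hwmem
              refine (FractionalIdeal.mem_one_iff _).mpr ⟨c₁ * c ^ k + c₂ * t ^ k, ?_⟩
              rw [_root_.map_add, _root_.map_mul, _root_.map_mul, ← hz_a, ← hz_b, ← hc, _root_.map_add,
                _root_.map_mul, _root_.map_mul]
              ring
            have hmem : algebraMap D K (t ^ k) ∈ (P : FractionalIdeal (nonZeroDivisors D) K) := by
              refine hYP ?_
              rw [← hz_b, mul_comm z]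
              exact FractionalIdeal.mul_mem_mul hbX hzX
            exact htP (hPmax.2.2.1.mem_of_pow_mem k (aux_mem_of_coe_mem hmem))
        · have h1X : (1 : K) ∈ X⁻¹ := aux_one_mem_inv hX0 hX1
          have hmem : algebraMap D K (b ^ N) ∈ (P : FractionalIdeal (nonZeroDivisors D) K) := by
            refine hYP ?_
            have hmm := FractionalIdeal.mul_mem_mul hbX h1X
            rwa [mul_one] at hmm
          exact hbP (hPmax.2.2.1.mem_of_pow_mem N (aux_mem_of_coe_mem hmem))
      · have h1X : (1 : K) ∈ X⁻¹ := aux_one_mem_inv hX0 hX1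
        have hmem : algebraMap D K (a ^ N) ∈ (P : FractionalIdeal (nonZeroDivisors D) K) := by
          refine hYP ?_
          have hmm := FractionalIdeal.mul_mem_mul haX h1X
          rwa [mul_one] at hmm
        exact haP (hPmax.2.2.1.mem_of_pow_mem N (aux_mem_of_coe_mem hmem))
    refine ⟨N, hNpos, d, ?_⟩
    unfold vOp at hd
    exact aux_star_eq_of_invertible s hX0 hX1 hinv hd
  · intro hBez a b ha hb
    obtain ⟨n, hn, d, hd⟩ := hBez a b ha hb
    refine ⟨n, hn, d, ?_⟩
    have hX0 : ((Ideal.span {a ^ n, b ^ n} : Ideal D) :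
        FractionalIdeal (nonZeroDivisors D) K) ≠ 0 := by
      refine FractionalIdeal.coeIdeal_ne_zero.mpr fun hbot => ?_
      have hmem : (a : D) ^ n ∈ Ideal.span {a ^ n, b ^ n} := Ideal.subset_span (Set.mem_insert _ _)
      rw [hbot] at hmem
      exact pow_ne_zero n ha (by simpa using hmem)
    unfold vOp
    rw [aux_inv_of_star_principal s hX0 FractionalIdeal.coeIdeal_le_one hd,
      FractionalIdeal.inv_eq, FractionalIdeal.one_div_spanSingleton, inv_inv]
end
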